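/- For two partitioned orders μ and μ' of [n], φ(μ) = φ(μ') if and only if the matrix representations of μ and μ' are equal up to permutations of the elements within each column of each matrix; consequently the number of equivalence classes of partitioned orders under the relation φ(μ)=φ(μ') equals the sum over integer partitions i of n of n! / ∏_{j=1}^{d(i)} (m(i,j)!)^j. -/

import Mathlib

/-- A partitioned order of `[n]`: a set of pairwise disjoint nonempty lists
of distinct elements of `[n]` whose union is `[n]`. -/
structure PartitionedOrder (n : ℕ) where
  oblocks : Finset (List (Fin n))
  nonempty : ∀ S ∈ oblocks, S ≠ []
  nodup : ∀ S ∈ oblocks, S.Nodup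
  disjoint : ∀ S ∈ oblocks, ∀ T ∈ oblocks, S ≠ T → ∀ x, x ∈ S → x ∉ T
  cover : ∀ x : Fin n, ∃ S ∈ oblocks, x ∈ S

namespace PartitionedOrder

variable {n : ℕ}

/-- The block `W_ℓ = { S_k[ℓ mod n_k] : k }` of the sequential rewriting. -/
def phiBlock (μ : PartitionedOrder n) (ℓ : ℕ) : Finset (Fin n) :=
  μ.oblocks.attach.image (fun S =>
    S.1.get ⟨ℓ % S.1.length,
      Nat.mod_lt _ (List.length_pos_of_ne_nil (μ.nonempty S.1 S.2))⟩)

/-- The period `p` of a partitioned order: the lcm of its o-block lengths. -/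
def period (μ : PartitionedOrder n) : ℕ := μ.oblocks.lcm List.length

/-- The sequential rewriting `φ(μ) = (W_0, …, W_{p-1})`. -/
def phi (μ : PartitionedOrder n) : List (Finset (Fin n)) :=
  (List.range μ.period).map μ.phiBlock

end PartitionedOrder

/-- An ordered partition of `[n]` (block-sequential update mode): a sequence of
nonempty pairwise disjoint subsets of `[n]` whose union is `[n]`. -/
def IsOrderedPartition {n : ℕ} (L : List (Finset (Fin n))) : Prop :=
  (∀ W ∈ L, W.Nonempty) ∧ L.Pairwise Disjoint ∧ ∀ x : Fin n, ∃ W ∈ L, x ∈ W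

/-- `m(i,j)`: the multiplicity of the part of size `j` in the partition `i`. -/
def Nat.Partition.mult {n : ℕ} (i : n.Partition) (j : ℕ) : ℕ :=
  Multiset.count j i.parts

/-- `d(i)`: the largest part of the partition `i` (0 for the empty partition). -/
def Nat.Partition.dmax {n : ℕ} (i : n.Partition) : ℕ :=
  i.parts.toFinset.sup id

/-- `lcm(i)`: the least common multiple of the distinct part sizes of `i`. -/
def Nat.Partition.lcmParts {n : ℕ} (i : n.Partition) : ℕ :=
  i.parts.toFinset.lcm id

/-- The set of entries in column `ℓ` of the matrix `M_j` of the matrix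
representation of `μ` (entries at position `ℓ` of the o-blocks of length `j`). -/
def PartitionedOrder.colSet {n : ℕ} (μ : PartitionedOrder n) (j ℓ : ℕ) :
    Set (Fin n) :=
  {x | ∃ S ∈ μ.oblocks, S.length = j ∧ S[ℓ]? = some x}

namespace PartitionedOrder
variable {n : ℕ}

lemma existsUnique_block (μ : PartitionedOrder n) (x : Fin n) :
    ∃! S, S ∈ μ.oblocks ∧ x ∈ S := by
  obtain ⟨S, hS, hx⟩ := μ.cover x
  refine ⟨S, ⟨hS, hx⟩, fun T ⟨hT, hxT⟩ => ?_⟩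
  by_contra hne
  exact μ.disjoint T hT S hS hne x hxT hx

noncomputable def block (μ : PartitionedOrder n) (x : Fin n) : List (Fin n) :=
  μ.oblocks.choose (fun S => x ∈ S) (μ.existsUnique_block x)

lemma block_mem (μ : PartitionedOrder n) (x : Fin n) : μ.block x ∈ μ.oblocks :=
  Finset.choose_mem _ _ _

lemma mem_block (μ : PartitionedOrder n) (x : Fin n) : x ∈ μ.block x :=
  Finset.choose_property _ _ _

lemma block_eq_of_mem (μ : PartitionedOrder n) {x : Fin n} {S : List (Fin n)}
    (hS : S ∈ μ.oblocks) (hx : x ∈ S) : μ.block x = S :=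
  ((μ.existsUnique_block x).unique ⟨μ.block_mem x, μ.mem_block x⟩ ⟨hS, hx⟩)

noncomputable def key (μ : PartitionedOrder n) (x : Fin n) : ℕ × ℕ :=
  ((μ.block x).length, (μ.block x).idxOf x)

lemma key_snd_lt_fst (μ : PartitionedOrder n) (x : Fin n) :
    (μ.key x).2 < (μ.key x).1 :=
  List.idxOf_lt_length_iff.2 (μ.mem_block x)

lemma key_of_mem (μ : PartitionedOrder n) {x : Fin n} {S : List (Fin n)}
    (hS : S ∈ μ.oblocks) (hx : x ∈ S) : μ.key x = (S.length, S.idxOf x) := by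
  unfold key; rw [μ.block_eq_of_mem hS hx]

lemma key_fst_dvd_period (μ : PartitionedOrder n) (x : Fin n) :
    (μ.key x).1 ∣ μ.period :=
  Finset.dvd_lcm (μ.block_mem x)

lemma indexOf_eq_of_getElem {α : Type*} [DecidableEq α] {S : List α} (hnd : S.Nodup)
    {i : ℕ} (h : i < S.length) {x : α} (hx : S[i] = x) : S.idxOf x = i := by
  subst hx
  have hm : S[i] ∈ S := List.getElem_mem h
  have h1 : S.idxOf S[i] < S.length := List.idxOf_lt_length_iff.2 hm
  exact (List.Nodup.getElem_inj_iff hnd (hi := h1) (hj := h)).1 (List.getElem_idxOf h1)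

lemma mem_colSet_iff (μ : PartitionedOrder n) {x : Fin n} {j ℓ : ℕ} :
    x ∈ μ.colSet j ℓ ↔ μ.key x = (j, ℓ) := by
  constructor
  · rintro ⟨S, hS, rfl, hget⟩
    have hlt : ℓ < S.length := by
      by_contra h
      rw [List.getElem?_eq_none (le_of_not_gt h)] at hget
      cases hget
    rw [List.getElem?_eq_getElem hlt] at hget
    have hgetx : S[ℓ] = x := Option.some_inj.1 hget
    have hx : x ∈ S := hgetx ▸ List.getElem_mem hlt
    rw [μ.key_of_mem hS hx, indexOf_eq_of_getElem (μ.nodup S hS) hlt hgetx]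
  · intro h
    refine ⟨μ.block x, μ.block_mem x, congrArg Prod.fst h, ?_⟩
    have h2 : (μ.block x).idxOf x = ℓ := congrArg Prod.snd h
    rw [← h2]
    exact List.getElem?_idxOf (μ.mem_block x)

lemma mem_phiBlock_iff (μ : PartitionedOrder n) {x : Fin n} {ℓ : ℕ} :
    x ∈ μ.phiBlock ℓ ↔ ℓ % (μ.key x).1 = (μ.key x).2 := by
  unfold phiBlock
  rw [Finset.mem_image]
  constructor
  · rintro ⟨⟨S, hS⟩, -, hget⟩
    simp only [List.get_eq_getElem] at hget
    have hlt : ℓ % S.length < S.length :=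
      Nat.mod_lt _ (List.length_pos_iff.mpr (μ.nonempty S hS))
    have hx : x ∈ S := hget ▸ List.getElem_mem hlt
    rw [μ.key_of_mem hS hx]
    exact (indexOf_eq_of_getElem (μ.nodup S hS) hlt hget).symm
  · intro h
    refine ⟨⟨μ.block x, μ.block_mem x⟩, Finset.mem_attach _ _, ?_⟩
    simp only [List.get_eq_getElem]
    have hkey : ℓ % (μ.block x).length = (μ.block x).idxOf x := h
    simp_rw [hkey]
    exact List.getElem_idxOf _

end PartitionedOrder
lemma filt_card {p j r : ℕ} (hd : j ∣ p) (hp : 0 < p) (hr : r < j) :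
    ((Finset.range p).filter (fun ℓ => ℓ % j = r)).card = p / j := by
  have hj : 0 < j := lt_of_le_of_lt (Nat.zero_le r) hr
  rw [show p / j = (Finset.range (p / j)).card from (Finset.card_range _).symm]
  apply Finset.card_bij' (fun ℓ _ => ℓ / j) (fun k _ => r + j * k)
  · intro ℓ hℓ
    rw [Finset.mem_filter, Finset.mem_range] at hℓ
    rw [Finset.mem_range]
    exact Nat.div_lt_div_of_lt_of_dvd hd hℓ.1
  · intro k hk
    rw [Finset.mem_range] at hk
    rw [Finset.mem_filter, Finset.mem_range]
    constructor
    · calc r + j * k < j + j * k := by omega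
        _ = j * (k + 1) := by ring
        _ ≤ j * (p / j) := Nat.mul_le_mul_left _ hk
        _ = p := Nat.mul_div_cancel' hd
    · simp [Nat.add_mul_mod_self_left, Nat.mod_eq_of_lt hr]
  · intro ℓ hℓ
    rw [Finset.mem_filter] at hℓ
    rw [← hℓ.2]
    exact Nat.mod_add_div ℓ j
  · intro k hk
    rw [Nat.add_mul_div_left _ _ hj, Nat.div_eq_of_lt hr, Nat.zero_add]

lemma pair_eq_of_filter_eq {p j r j' r' : ℕ} (hd : j ∣ p) (hd' : j' ∣ p) (hp : 0 < p)
    (hr : r < j) (hr' : r' < j')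
    (h : (Finset.range p).filter (fun ℓ => ℓ % j = r)
       = (Finset.range p).filter (fun ℓ => ℓ % j' = r')) :
    j = j' ∧ r = r' := by
  have hcard : p / j = p / j' := by rw [← filt_card hd hp hr, ← filt_card hd' hp hr', h]
  have hj : j = j' := by
    have h1 : p / (p / j) = j := Nat.div_div_self hd hp.ne'
    have h2 : p / (p / j') = j' := Nat.div_div_self hd' hp.ne'
    rw [← h1, ← h2, hcard]
  subst hj
  refine ⟨rfl, ?_⟩
  have hrange : r ∈ (Finset.range p).filter (fun ℓ => ℓ % j = r) := by
    rw [Finset.mem_filter, Finset.mem_range]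
    exact ⟨lt_of_lt_of_le hr (Nat.le_of_dvd hp hd), Nat.mod_eq_of_lt hr⟩
  rw [h, Finset.mem_filter] at hrange
  rw [← hrange.2, Nat.mod_eq_of_lt hr]

namespace PartitionedOrder
open Finset
variable {n : ℕ}

lemma period_pos (μ : PartitionedOrder n) : 0 < μ.period := by
  rw [Nat.pos_iff_ne_zero]
  intro h
  unfold period at h
  rw [Finset.lcm_eq_zero_iff] at h
  obtain ⟨S, hS, hlen⟩ := h
  exact μ.nonempty S hS (List.eq_nil_of_length_eq_zero hlen)

lemma phi_length (μ : PartitionedOrder n) : μ.phi.length = μ.period := by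
  simp [phi]

lemma phi_getElem (μ : PartitionedOrder n) {ℓ : ℕ} (h : ℓ < μ.period) :
    μ.phi[ℓ]'(by simpa [phi_length]) = μ.phiBlock ℓ := by
  simp [phi]

lemma key_eq_of_phi_eq {μ μ' : PartitionedOrder n} (h : μ.phi = μ'.phi) :
    μ.key = μ'.key := by
  have hper : μ.period = μ'.period := by
    have := congrArg List.length h
    rwa [phi_length, phi_length] at this
  have hblock : ∀ ℓ < μ.period, μ.phiBlock ℓ = μ'.phiBlock ℓ := by
    intro ℓ hℓ
    have h1 := μ.phi_getElem hℓ
    have h2 := μ'.phi_getElem (hper ▸ hℓ)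
    rw [← h1, ← h2]
    congr 1
  funext x
  set p := μ.period with hp
  have hpos : 0 < p := μ.period_pos
  have hfil : (Finset.range p).filter (fun ℓ => ℓ % (μ.key x).1 = (μ.key x).2)
      = (Finset.range p).filter (fun ℓ => ℓ % (μ'.key x).1 = (μ'.key x).2) := by
    apply Finset.filter_congr
    intro ℓ hℓ
    rw [Finset.mem_range] at hℓ
    rw [← μ.mem_phiBlock_iff, ← μ'.mem_phiBlock_iff, hblock ℓ hℓ]
  obtain ⟨h1, h2⟩ := pair_eq_of_filter_eq (μ.key_fst_dvd_period x)
    (hper.symm ▸ μ'.key_fst_dvd_period x : (μ'.key x).1 ∣ p) hpos (μ.key_snd_lt_fst x) (μ'.key_snd_lt_fst x) hfil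
  exact Prod.ext h1 h2

lemma lengths_image_eq (μ : PartitionedOrder n) :
    μ.oblocks.image List.length = Finset.univ.image (fun x => (μ.key x).1) := by
  ext j
  simp only [Finset.mem_image, Finset.mem_univ, true_and]
  constructor
  · rintro ⟨S, hS, rfl⟩
    obtain ⟨x, hx⟩ := List.exists_mem_of_ne_nil S (μ.nonempty S hS)
    exact ⟨x, by rw [μ.key_of_mem hS hx]⟩
  · rintro ⟨x, rfl⟩
    exact ⟨μ.block x, μ.block_mem x, rfl⟩

lemma period_eq_of_key_eq {μ μ' : PartitionedOrder n} (h : μ.key = μ'.key) :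
    μ.period = μ'.period := by
  have h1 : μ.period = (μ.oblocks.image List.length).lcm id := by
    rw [Finset.lcm_image]; rfl
  have h2 : μ'.period = (μ'.oblocks.image List.length).lcm id := by
    rw [Finset.lcm_image]; rfl
  rw [h1, h2, lengths_image_eq, lengths_image_eq, h]

lemma phi_eq_of_key_eq {μ μ' : PartitionedOrder n} (h : μ.key = μ'.key) :
    μ.phi = μ'.phi := by
  have hblock : μ.phiBlock = μ'.phiBlock := by
    funext ℓ
    ext x
    rw [μ.mem_phiBlock_iff, μ'.mem_phiBlock_iff, h]
  unfold phi
  rw [period_eq_of_key_eq h, hblock]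

lemma key_eq_iff_colSet {μ μ' : PartitionedOrder n} :
    μ.key = μ'.key ↔ ∀ j ℓ, ℓ < j → μ.colSet j ℓ = μ'.colSet j ℓ := by
  constructor
  · intro h j ℓ _
    ext x
    rw [μ.mem_colSet_iff, μ'.mem_colSet_iff, h]
  · intro h
    funext x
    have hlt := μ.key_snd_lt_fst x
    have hx : x ∈ μ.colSet (μ.key x).1 (μ.key x).2 := μ.mem_colSet_iff.2 rfl
    rw [h _ _ hlt] at hx
    rw [μ'.mem_colSet_iff.1 hx]

theorem phi_eq_iff_colSet {μ μ' : PartitionedOrder n} :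
    μ.phi = μ'.phi ↔ ∀ j ℓ, ℓ < j → μ.colSet j ℓ = μ'.colSet j ℓ := by
  rw [← key_eq_iff_colSet]
  exact ⟨key_eq_of_phi_eq, phi_eq_of_key_eq⟩

theorem phi_eq_iff_key {μ μ' : PartitionedOrder n} :
    μ.phi = μ'.phi ↔ μ.key = μ'.key :=
  ⟨key_eq_of_phi_eq, phi_eq_of_key_eq⟩

end PartitionedOrder


section S4
open Finset

variable {n : ℕ}

def fibcard (g : Fin n → ℕ × ℕ) (p : ℕ × ℕ) : ℕ :=
  (Finset.univ.filter fun x => g x = p).card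

def GoodFn (g : Fin n → ℕ × ℕ) : Prop :=
  (∀ x, (g x).2 < (g x).1) ∧ ∀ j r, r < j → fibcard g (j, r) = fibcard g (j, 0)

variable (g : Fin n → ℕ × ℕ)

def fibList (p : ℕ × ℕ) : List (Fin n) :=
  (Finset.univ.filter fun x => g x = p).sort (· ≤ ·)

lemma length_fibList (p : ℕ × ℕ) : (fibList g p).length = fibcard g p :=
  Finset.length_sort _

lemma mem_fibList {x : Fin n} {p : ℕ × ℕ} : x ∈ fibList g p ↔ g x = p := by
  simp [fibList, Finset.mem_sort]

lemma nodup_fibList (p : ℕ × ℕ) : (fibList g p).Nodup :=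
  Finset.sort_nodup _ _

def tIdx (x : Fin n) : ℕ := (fibList g (g x)).idxOf x

lemma tIdx_lt (hg : GoodFn g) (x : Fin n) {r : ℕ} (hr : r < (g x).1) :
    tIdx g x < (fibList g ((g x).1, r)).length := by
  have h0 : tIdx g x < (fibList g (g x)).length :=
    List.idxOf_lt_length_iff.2 ((mem_fibList g).2 rfl)
  rw [length_fibList] at h0 ⊢
  rw [hg.2 _ _ hr]
  rw [show fibcard g (g x) = fibcard g ((g x).1, 0) by
    conv_lhs => rw [← Prod.mk.eta (p := g x)]
    exact hg.2 _ _ (hg.1 x)] at h0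
  exact h0

def gblock (x : Fin n) : List (Fin n) :=
  (List.range (g x).1).map (fun r => (fibList g ((g x).1, r)).getD (tIdx g x) x)

lemma gblock_length (x : Fin n) : (gblock g x).length = (g x).1 := by
  simp [gblock]

lemma gblock_getElem (hg : GoodFn g) (x : Fin n) {r : ℕ} (hr : r < (g x).1) :
    (gblock g x)[r]'(by rw [gblock_length]; exact hr)
      = (fibList g ((g x).1, r))[tIdx g x]'(tIdx_lt g hg x hr) := by
  simp only [gblock, List.getElem_map, List.getElem_range]
  exact List.getD_eq_getElem _ _ (tIdx_lt g hg x hr)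

lemma g_gblock_getElem (hg : GoodFn g) (x : Fin n) {r : ℕ} (hr : r < (g x).1) :
    g ((gblock g x)[r]'(by rw [gblock_length]; exact hr)) = ((g x).1, r) := by
  rw [gblock_getElem g hg x hr]
  exact (mem_fibList g).1 (List.getElem_mem _)

lemma indexOf_eq_of_getElem' {α : Type*} [DecidableEq α] {S : List α} (hnd : S.Nodup)
    {i : ℕ} (h : i < S.length) {x : α} (hx : S[i] = x) : S.idxOf x = i := by
  subst hx
  have hm : S[i] ∈ S := List.getElem_mem h
  have h1 : S.idxOf S[i] < S.length := List.idxOf_lt_length_iff.2 hm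
  exact (List.Nodup.getElem_inj_iff hnd (hi := h1) (hj := h)).1 (List.getElem_idxOf h1)

lemma self_mem_gblock (hg : GoodFn g) (x : Fin n) :
    (gblock g x)[(g x).2]'(by rw [gblock_length]; exact hg.1 x) = x := by
  rw [gblock_getElem g hg x (hg.1 x)]
  have hpair : ((g x).1, (g x).2) = g x := Prod.mk.eta
  have hmem : x ∈ fibList g (g x) := (mem_fibList g).2 rfl
  have hlt : (fibList g (g x)).idxOf x < (fibList g (g x)).length :=
    List.idxOf_lt_length_iff.2 hmem
  simp_rw [hpair]
  exact List.getElem_idxOf hlt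

lemma gblock_nodup (hg : GoodFn g) (x : Fin n) : (gblock g x).Nodup := by
  rw [List.nodup_iff_injective_get]
  rintro ⟨a, ha⟩ ⟨b, hb⟩ hab
  simp only [List.get_eq_getElem] at hab
  have h1 := g_gblock_getElem g hg x (by rw [gblock_length] at ha; exact ha)
  have h2 := g_gblock_getElem g hg x (by rw [gblock_length] at hb; exact hb)
  rw [hab] at h1
  rw [h1] at h2
  exact Fin.ext (Prod.ext_iff.1 h2).2

lemma gblock_eq_of_mem (hg : GoodFn g) {x y : Fin n} (hy : y ∈ gblock g x) :
    gblock g y = gblock g x := by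
  obtain ⟨r, hr, hget⟩ := List.getElem_of_mem hy
  have hr' : r < (g x).1 := by rwa [gblock_length] at hr
  have hgy : g y = ((g x).1, r) := by rw [← hget]; exact g_gblock_getElem g hg x hr'
  have hty : tIdx g y = tIdx g x := by
    unfold tIdx
    rw [hgy]
    apply indexOf_eq_of_getElem' (nodup_fibList g _) (tIdx_lt g hg x hr')
    rw [← gblock_getElem g hg x hr', hget]
  apply List.ext_getElem
  · rw [gblock_length, gblock_length, hgy]
  · intro i h1 h2
    have h2' : i < (g x).1 := by rwa [gblock_length] at h2
    have h1' : i < (g y).1 := by rwa [gblock_length] at h1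
    rw [gblock_getElem g hg y h1', gblock_getElem g hg x h2']
    congr 1
    rw [hgy]

noncomputable def gBlocks : Finset (List (Fin n)) := Finset.univ.image (gblock g)

lemma mem_gBlocks {S : List (Fin n)} : S ∈ gBlocks g ↔ ∃ x, gblock g x = S := by
  simp [gBlocks]

variable {g} in
noncomputable def muOf (hg : GoodFn g) : PartitionedOrder n where
  oblocks := gBlocks g
  nonempty := by
    intro S hS
    obtain ⟨x, rfl⟩ := (mem_gBlocks g).1 hS
    apply List.ne_nil_of_length_pos
    rw [gblock_length]
    exact lt_of_le_of_lt (Nat.zero_le _) (hg.1 x)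
  nodup := by
    intro S hS
    obtain ⟨x, rfl⟩ := (mem_gBlocks g).1 hS
    exact gblock_nodup g hg x
  disjoint := by
    intro S hS T hT hne y hyS hyT
    obtain ⟨a, rfl⟩ := (mem_gBlocks g).1 hS
    obtain ⟨b, rfl⟩ := (mem_gBlocks g).1 hT
    exact hne ((gblock_eq_of_mem g hg hyS).symm.trans (gblock_eq_of_mem g hg hyT))
  cover := by
    intro x
    refine ⟨gblock g x, (mem_gBlocks g).2 ⟨x, rfl⟩, ?_⟩
    have h := List.getElem_mem (l := gblock g x) (n := (g x).2)
      (by rw [gblock_length]; exact hg.1 x)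
    rwa [self_mem_gblock g hg x] at h

variable {g} in
lemma key_muOf (hg : GoodFn g) : (muOf hg).key = g := by
  funext x
  have hmem : x ∈ gblock g x := by
    have h := List.getElem_mem (l := gblock g x) (n := (g x).2)
      (by rw [gblock_length]; exact hg.1 x)
    rwa [self_mem_gblock g hg x] at h
  have hblk : gblock g x ∈ (muOf hg).oblocks := (mem_gBlocks g).2 ⟨x, rfl⟩
  rw [(muOf hg).key_of_mem hblk hmem]
  have hidx : (gblock g x).idxOf x = (g x).2 :=
    indexOf_eq_of_getElem' (gblock_nodup g hg x) _ (self_mem_gblock g hg x)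
  rw [gblock_length, hidx]
end S4

section S6
open Finset
variable {n : ℕ}

lemma fibcard_key (μ : PartitionedOrder n) {j r : ℕ} (hr : r < j) :
    fibcard μ.key (j, r) = (μ.oblocks.filter fun S => S.length = j).card := by
  unfold fibcard
  refine (Finset.card_bij
    (fun S hS => S[r]'(by rw [(Finset.mem_filter.1 hS).2]; exact hr)) ?_ ?_ ?_).symm
  · intro S hS
    have hSm := (Finset.mem_filter.1 hS).1
    have hlen := (Finset.mem_filter.1 hS).2
    rw [Finset.mem_filter]
    refine ⟨Finset.mem_univ _, ?_⟩
    rw [μ.key_of_mem hSm (List.getElem_mem _)]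
    have := PartitionedOrder.indexOf_eq_of_getElem (μ.nodup S hSm)
      (by rw [hlen]; exact hr) (rfl : S[r]'(by rw [hlen]; exact hr) = _)
    rw [this, hlen]
  · intro S hS T hT h
    by_contra hne
    refine μ.disjoint S (Finset.mem_filter.1 hS).1 T (Finset.mem_filter.1 hT).1 hne
      (S[r]'(by rw [(Finset.mem_filter.1 hS).2]; exact hr)) (List.getElem_mem _) ?_
    rw [h]
    exact List.getElem_mem _
  · intro x hx
    rw [Finset.mem_filter] at hx
    have hkey := hx.2
    have hlen : (μ.block x).length = j := by
      have := congrArg Prod.fst hkey; simpa [PartitionedOrder.key] using this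
    have hidx : (μ.block x).idxOf x = r := by
      have := congrArg Prod.snd hkey; simpa [PartitionedOrder.key] using this
    refine ⟨μ.block x, Finset.mem_filter.2 ⟨μ.block_mem x, hlen⟩, ?_⟩
    have h1 : (μ.block x)[r]? = some x := by
      rw [← hidx]; exact List.getElem?_idxOf (μ.mem_block x)
    rw [List.getElem?_eq_getElem (by rw [hlen]; exact hr)] at h1
    exact Option.some_inj.1 h1

lemma goodFn_key (μ : PartitionedOrder n) : GoodFn μ.key := by
  refine ⟨μ.key_snd_lt_fst, fun j r hr => ?_⟩
  rw [fibcard_key μ hr, fibcard_key μ (lt_of_le_of_lt (Nat.zero_le r) hr)]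

noncomputable def quotEquivGood (n : ℕ) :
    Quot (fun μ μ' : PartitionedOrder n => μ.phi = μ'.phi) ≃ {g : Fin n → ℕ × ℕ // GoodFn g} where
  toFun := Quot.lift (fun μ => ⟨μ.key, goodFn_key μ⟩)
    (fun μ μ' h => Subtype.ext (PartitionedOrder.phi_eq_iff_key.1 h))
  invFun := fun gp => Quot.mk _ (muOf gp.2)
  left_inv := by
    intro q
    induction q using Quot.ind with
    | _ μ =>
      apply Quot.sound
      exact PartitionedOrder.phi_eq_iff_key.2 (key_muOf (goodFn_key μ))
  right_inv := fun gp => Subtype.ext (key_muOf gp.2)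

end S6

section S7
open Finset

variable {n : ℕ}

def cnt {n : ℕ} (i : n.Partition) (p : ℕ × ℕ) : ℕ :=
  if p.2 < p.1 then i.mult p.1 else 0

variable (g : Fin n → ℕ × ℕ)

lemma fibcard_pos_of_mem (x : Fin n) : 0 < fibcard g (g x) :=
  Finset.card_pos.2 ⟨x, Finset.mem_filter.2 ⟨Finset.mem_univ _, rfl⟩⟩

lemma fibcard_pair_pos (hg : GoodFn g) {j r : ℕ} (hr : r < j)
    (hj : 0 < fibcard g (j, 0)) : 0 < fibcard g (j, r) := by
  rwa [hg.2 _ _ hr]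

lemma exists_of_fibcard_pos {p : ℕ × ℕ} (h : 0 < fibcard g p) : ∃ x, g x = p := by
  obtain ⟨x, hx⟩ := Finset.card_pos.1 h
  exact ⟨x, (Finset.mem_filter.1 hx).2⟩

/-- The multiset of block sizes of a good function. -/
def partsOf : Multiset ℕ :=
  ((Finset.univ.filter fun x : Fin n => (g x).2 = 0).val.map (fun x => (g x).1))

lemma count_partsOf (j : ℕ) : Multiset.count j (partsOf g) = fibcard g (j, 0) := by
  unfold partsOf fibcard
  rw [Multiset.count_map, ← Finset.filter_val, Finset.filter_filter, ← Finset.card_def]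
  congr 1
  apply Finset.filter_congr
  intro x _
  constructor
  · rintro ⟨h1, h2⟩; exact Prod.ext h2.symm h1
  · intro h; rw [h]; exact ⟨rfl, rfl⟩

def J1 : Finset ℕ := Finset.univ.image (fun x => (g x).1)

lemma mem_image_g_iff (hg : GoodFn g) {p : ℕ × ℕ} :
    p ∈ Finset.univ.image g ↔ p.1 ∈ J1 g ∧ p.2 < p.1 := by
  constructor
  · rintro hp
    rw [Finset.mem_image] at hp
    obtain ⟨x, -, rfl⟩ := hp
    exact ⟨Finset.mem_image.2 ⟨x, Finset.mem_univ _, rfl⟩, hg.1 x⟩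
  · rintro ⟨h1, h2⟩
    rw [Finset.mem_image]
    obtain ⟨x, -, hx⟩ := Finset.mem_image.1 h1
    have hp0 : 0 < fibcard g (p.1, 0) := by
      have h3 := fibcard_pos_of_mem g x
      have h4 : fibcard g (g x) = fibcard g ((g x).1, 0) := by
        conv_lhs => rw [← Prod.mk.eta (p := g x)]
        exact hg.2 _ _ (hg.1 x)
      rw [h4, hx] at h3
      exact h3
    have := fibcard_pair_pos g hg h2 hp0
    obtain ⟨y, hy⟩ := exists_of_fibcard_pos g this
    exact ⟨y, Finset.mem_univ _, by rw [hy]⟩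

lemma fib0_pos_of_mem_J1 (hg : GoodFn g) {j : ℕ} (hj : j ∈ J1 g) :
    0 < fibcard g (j, 0) := by
  obtain ⟨x, -, hx⟩ := Finset.mem_image.1 hj
  have h3 := fibcard_pos_of_mem g x
  have h4 : fibcard g (g x) = fibcard g ((g x).1, 0) := by
    conv_lhs => rw [← Prod.mk.eta (p := g x)]
    exact hg.2 _ _ (hg.1 x)
  rwa [h4, hx] at h3

lemma image_g_eq (hg : GoodFn g) :
    Finset.univ.image g
      = (J1 g).biUnion (fun j => (Finset.range j).image (fun r => (j, r))) := by
  ext p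
  rw [mem_image_g_iff g hg, Finset.mem_biUnion]
  constructor
  · rintro ⟨h1, h2⟩
    exact ⟨p.1, h1, Finset.mem_image.2 ⟨p.2, Finset.mem_range.2 h2, Prod.mk.eta⟩⟩
  · rintro ⟨j, hj, hp⟩
    obtain ⟨r, hr, rfl⟩ := Finset.mem_image.1 hp
    exact ⟨hj, Finset.mem_range.1 hr⟩

lemma sum_partsOf (hg : GoodFn g) : (partsOf g).sum = n := by
  have hA : ∀ j ∈ J1 g, 0 < j := by
    intro j hj
    obtain ⟨x, -, rfl⟩ := Finset.mem_image.1 hj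
    exact lt_of_le_of_lt (Nat.zero_le _) (hg.1 x)
  -- LHS
  have hL : (partsOf g).sum = ∑ j ∈ J1 g, fibcard g (j, 0) * j := by
    have h0 : (partsOf g).sum
        = ∑ x ∈ (Finset.univ.filter fun x : Fin n => (g x).2 = 0), (g x).1 := rfl
    rw [h0, Finset.sum_comp (fun j => j) (fun x => (g x).1)]
    have himg : (Finset.univ.filter fun x : Fin n => (g x).2 = 0).image (fun x => (g x).1)
        = J1 g := by
      apply Finset.Subset.antisymm
      · intro j hj
        obtain ⟨x, -, rfl⟩ := Finset.mem_image.1 hj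
        exact Finset.mem_image.2 ⟨x, Finset.mem_univ _, rfl⟩
      · intro j hj
        have hj0 := fib0_pos_of_mem_J1 g hg hj
        obtain ⟨y, hy⟩ := exists_of_fibcard_pos g hj0
        refine Finset.mem_image.2 ⟨y, Finset.mem_filter.2 ⟨Finset.mem_univ _, by rw [hy]⟩, ?_⟩
        rw [hy]
    rw [himg]
    apply Finset.sum_congr rfl
    intro j hj
    rw [smul_eq_mul]
    congr 1
    unfold fibcard
    congr 1
    rw [Finset.filter_filter]
    apply Finset.filter_congr
    intro x _
    constructor
    · rintro ⟨h1, h2⟩; exact Prod.ext h2 h1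
    · intro h; rw [h]; exact ⟨rfl, rfl⟩
  -- RHS
  have hR : (n : ℕ) = ∑ j ∈ J1 g, fibcard g (j, 0) * j := by
    have h1 : (Finset.univ : Finset (Fin n)).card
        = ∑ p ∈ Finset.univ.image g, (Finset.univ.filter fun x => g x = p).card :=
      Finset.card_eq_sum_card_fiberwise (fun x _ => Finset.mem_image.2 ⟨x, Finset.mem_univ _, rfl⟩)
    rw [Finset.card_univ, Fintype.card_fin] at h1
    refine h1.trans ?_
    rw [image_g_eq g hg, Finset.sum_biUnion]
    · apply Finset.sum_congr rfl
      intro j hj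
      rw [Finset.sum_image (by intro a _ b _ h; exact (Prod.ext_iff.1 h).2)]
      have : ∀ r ∈ Finset.range j, (Finset.univ.filter fun x => g x = (j, r)).card
          = fibcard g (j, 0) := by
        intro r hr
        exact hg.2 _ _ (Finset.mem_range.1 hr)
      rw [Finset.sum_congr rfl this, Finset.sum_const, Finset.card_range, smul_eq_mul,
        Nat.mul_comm]
    · intro a ha b hb hab
      apply Finset.disjoint_left.2
      intro p hpa hpb
      obtain ⟨r, -, rfl⟩ := Finset.mem_image.1 hpa
      obtain ⟨r', -, h⟩ := Finset.mem_image.1 hpb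
      exact hab (Prod.ext_iff.1 h).1.symm
  rw [hL, ← hR]


def partOf (hg : GoodFn g) : n.Partition where
  parts := partsOf g
  parts_pos := by
    intro j hj
    obtain ⟨x, -, rfl⟩ := Multiset.mem_map.1 hj
    exact lt_of_le_of_lt (Nat.zero_le _) (hg.1 x)
  parts_sum := sum_partsOf g hg

lemma fibcard_eq_cnt (hg : GoodFn g) (p : ℕ × ℕ) :
    fibcard g p = cnt (partOf g hg) p := by
  unfold cnt
  by_cases h : p.2 < p.1
  · rw [if_pos h]
    show fibcard g p = Multiset.count p.1 (partsOf g)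
    rw [count_partsOf]
    conv_lhs => rw [← Prod.mk.eta (p := p)]
    exact hg.2 _ _ h
  · rw [if_neg h]
    rw [fibcard, Finset.card_eq_zero, Finset.filter_eq_empty_iff]
    intro x _
    intro hx
    exact h (hx ▸ hg.1 x)

lemma good_of_cnt {i : n.Partition} (h : ∀ p, fibcard g p = cnt i p) : GoodFn g := by
  constructor
  · intro x
    by_contra hx
    have h1 := fibcard_pos_of_mem g x
    rw [h, cnt, if_neg hx] at h1
    exact lt_irrefl 0 h1
  · intro j r hr
    rw [h, h, cnt, cnt, if_pos hr, if_pos (lt_of_le_of_lt (Nat.zero_le r) hr)]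

lemma partOf_eq (hg : GoodFn g) {i : n.Partition} (h : ∀ p, fibcard g p = cnt i p) :
    partOf g hg = i := by
  apply Nat.Partition.ext
  ext j
  show Multiset.count j (partsOf g) = Multiset.count j i.parts
  rw [count_partsOf, h (j, 0)]
  unfold cnt
  by_cases hj : (0 : ℕ) < j
  · rw [if_pos hj]; rfl
  · rw [if_neg hj]
    symm
    rw [Multiset.count_eq_zero]
    intro hmem
    exact hj (i.parts_pos hmem)

variable (n) in
noncomputable def goodEquivSigma :
    {g : Fin n → ℕ × ℕ // GoodFn g}
      ≃ Σ i : n.Partition, {g : Fin n → ℕ × ℕ // ∀ p, fibcard g p = cnt i p} where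
  toFun gp := ⟨partOf gp.1 gp.2, gp.1, fibcard_eq_cnt gp.1 gp.2⟩
  invFun x := ⟨x.2.1, good_of_cnt x.2.1 x.2.2⟩
  left_inv gp := Subtype.ext rfl
  right_inv := by
    rintro ⟨i, g, h⟩
    have hi := partOf_eq g (good_of_cnt g h) h
    simp only [Sigma.mk.inj_iff]
    refine ⟨hi, ?_⟩
    rw [Subtype.heq_iff_coe_eq (fun g' => by rw [hi])]

lemma val_fst_le {i : n.Partition} {g : Fin n → ℕ × ℕ}
    (h : ∀ p, fibcard g p = cnt i p) (x : Fin n) : (g x).1 ≤ n := by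
  have h1 := fibcard_pos_of_mem g x
  rw [h, cnt] at h1
  by_cases hc : (g x).2 < (g x).1
  · rw [if_pos hc] at h1
    have hmem : (g x).1 ∈ i.parts := Multiset.count_pos.1 h1
    have := Multiset.single_le_sum (fun y _ => Nat.zero_le y) _ hmem
    rwa [i.parts_sum] at this
  · rw [if_neg hc] at h1
    exact absurd h1 (lt_irrefl 0)

instance finiteT (i : n.Partition) :
    Finite {g : Fin n → ℕ × ℕ // ∀ p, fibcard g p = cnt i p} := by
  apply Finite.of_injective (f := fun gp (x : Fin n) =>
    ((⟨min ((gp.1 x).1) n, by omega⟩ : Fin (n + 1)),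
     (⟨min ((gp.1 x).2) n, by omega⟩ : Fin (n + 1))))
  intro a b hab
  apply Subtype.ext
  funext x
  have hax := congrFun hab x
  have h1a := val_fst_le a.2 x
  have h1b := val_fst_le b.2 x
  have h2a : (a.1 x).2 ≤ n := le_trans (le_of_lt ((good_of_cnt a.1 a.2).1 x)) h1a
  have h2b : (b.1 x).2 ≤ n := le_trans (le_of_lt ((good_of_cnt b.1 b.2).1 x)) h1b
  have e1 := congrArg (fun q => (q.1 : ℕ)) hax
  have e2 := congrArg (fun q => (q.2 : ℕ)) hax
  simp only at e1 e2
  rw [min_eq_left h1a, min_eq_left h1b] at e1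
  rw [min_eq_left h2a, min_eq_left h2b] at e2
  exact Prod.ext e1 e2

lemma natCard_sigma {ι : Type*} [Fintype ι] (β : ι → Type*) [∀ i, Finite (β i)] :
    Nat.card (Σ i, β i) = ∑ i, Nat.card (β i) := by
  letI : ∀ i, Fintype (β i) := fun i => Fintype.ofFinite _
  simp [Nat.card_eq_fintype_card, Fintype.card_sigma]


lemma pairwiseDisjoint_pairs (s : Finset ℕ) :
    (↑s : Set ℕ).PairwiseDisjoint (fun j => (Finset.range j).image fun r => (j, r)) := by
  intro a _ b _ hab
  apply Finset.disjoint_left.2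
  intro p hpa hpb
  obtain ⟨r, -, rfl⟩ := Finset.mem_image.1 hpa
  obtain ⟨r', -, h⟩ := Finset.mem_image.1 hpb
  exact hab (Prod.ext_iff.1 h).1.symm

def Ai (i : n.Partition) : Finset (ℕ × ℕ) :=
  i.parts.toFinset.biUnion (fun j => (Finset.range j).image (fun r => (j, r)))

lemma mem_Ai {i : n.Partition} {p : ℕ × ℕ} :
    p ∈ Ai i ↔ p.1 ∈ i.parts ∧ p.2 < p.1 := by
  rw [Ai, Finset.mem_biUnion]
  constructor
  · rintro ⟨j, hj, hp⟩
    obtain ⟨r, hr, rfl⟩ := Finset.mem_image.1 hp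
    exact ⟨Multiset.mem_toFinset.1 hj, Finset.mem_range.1 hr⟩
  · rintro ⟨h1, h2⟩
    exact ⟨p.1, Multiset.mem_toFinset.2 h1,
      Finset.mem_image.2 ⟨p.2, Finset.mem_range.2 h2, Prod.mk.eta⟩⟩

lemma cnt_pos_iff {i : n.Partition} {p : ℕ × ℕ} : 0 < cnt i p ↔ p ∈ Ai i := by
  rw [mem_Ai, cnt]
  by_cases h : p.2 < p.1
  · rw [if_pos h]
    simp only [h, and_true]
    exact Multiset.count_pos
  · rw [if_neg h]
    simp [h]

lemma sum_Ai (i : n.Partition) : ∑ p ∈ Ai i, i.mult p.1 = n := by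
  rw [Ai, Finset.sum_biUnion (pairwiseDisjoint_pairs _)]
  have h1 : ∀ j ∈ i.parts.toFinset,
      ∑ p ∈ (Finset.range j).image (fun r => (j, r)), i.mult p.1
        = Multiset.count j i.parts * j := by
    intro j hj
    rw [Finset.sum_image (fun a _ b _ h => (Prod.ext_iff.1 h).2)]
    show ∑ _x ∈ Finset.range j, i.mult j = _
    rw [Finset.sum_const, Finset.card_range, smul_eq_mul, Nat.mul_comm]
    rfl
  rw [Finset.sum_congr rfl h1]
  calc ∑ j ∈ i.parts.toFinset, Multiset.count j i.parts * j
      = ∑ j ∈ i.parts.toFinset, Multiset.count j i.parts • j := by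
        simp [smul_eq_mul]
    _ = i.parts.sum := (Finset.sum_multiset_count i.parts).symm
    _ = n := i.parts_sum

lemma exists_type_fn (i : n.Partition) :
    ∃ g : Fin n → ℕ × ℕ, ∀ p, fibcard g p = cnt i p := by
  classical
  have hcard : Fintype.card (Σ q : {p // p ∈ Ai i}, Fin (i.mult q.1.1))
      = Fintype.card (Fin n) := by
    rw [Fintype.card_sigma, Fintype.card_fin]
    simp only [Fintype.card_fin]
    rw [Finset.sum_coe_sort (Ai i) (fun p => i.mult p.1)]
    exact sum_Ai i
  obtain e := Fintype.equivOfCardEq hcard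
  refine ⟨fun x => ((e.symm x).1 : ℕ × ℕ), fun p => ?_⟩
  have hbij : fibcard (fun x => ((e.symm x).1 : ℕ × ℕ)) p
      = (Finset.univ.filter
          fun y : Σ q : {p // p ∈ Ai i}, Fin (i.mult q.1.1) => ((y.1 : ℕ × ℕ) = p)).card := by
    apply Finset.card_bij (fun x _ => e.symm x)
    · intro x hx
      rw [Finset.mem_filter] at hx ⊢
      exact ⟨Finset.mem_univ _, hx.2⟩
    · intro a _ b _ h
      exact e.symm.injective h
    · intro y hy
      rw [Finset.mem_filter] at hy
      refine ⟨e y, Finset.mem_filter.2 ⟨Finset.mem_univ _, ?_⟩, ?_⟩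
      · show ((e.symm (e y)).1 : ℕ × ℕ) = p
        rw [Equiv.symm_apply_apply]
        exact hy.2
      · rw [Equiv.symm_apply_apply]
  rw [hbij]
  have hsig : (Finset.univ.filter
        fun y : Σ q : {p // p ∈ Ai i}, Fin (i.mult q.1.1) => ((y.1 : ℕ × ℕ) = p))
      = ((Finset.univ.filter fun q : {p // p ∈ Ai i} => (q : ℕ × ℕ) = p).sigma
          fun _ => Finset.univ) := by
    ext ⟨q, v⟩
    simp [Finset.mem_sigma]
  rw [hsig, Finset.card_sigma]
  by_cases hp : p ∈ Ai i
  · have hfil : (Finset.univ.filter fun q : {p // p ∈ Ai i} => (q : ℕ × ℕ) = p)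
        = {⟨p, hp⟩} := by
      ext q
      simp [Subtype.ext_iff]
    rw [hfil, Finset.sum_singleton, Finset.card_univ, Fintype.card_fin]
    rw [cnt, if_pos (mem_Ai.1 hp).2]
  · have hfil : (Finset.univ.filter fun q : {p // p ∈ Ai i} => (q : ℕ × ℕ) = p)
        = ∅ := by
      ext q
      simp only [Finset.mem_filter, Finset.mem_univ, true_and, Finset.notMem_empty,
        iff_false]
      intro h
      exact hp (h ▸ q.2)
    rw [hfil, Finset.sum_empty, cnt]
    by_cases h : p.2 < p.1
    · rw [if_pos h]
      symm
      rw [Nat.Partition.mult, Multiset.count_eq_zero]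
      intro hmem
      exact hp (mem_Ai.2 ⟨hmem, h⟩)
    · rw [if_neg h]

theorem card_type (i : n.Partition) :
    Nat.card {g : Fin n → ℕ × ℕ // ∀ p, fibcard g p = cnt i p}
      = n.factorial / ∏ j ∈ Finset.Icc 1 i.dmax, (i.mult j).factorial ^ j := by
  classical
  obtain ⟨g0, hg0⟩ := exists_type_fn i
  have hcomp : ∀ (g : Fin n → ℕ × ℕ) (σ : Equiv.Perm (Fin n)) (p : ℕ × ℕ),
      fibcard (g ∘ σ) p = fibcard g p := by
    intro g σ p
    apply Finset.card_bij (fun x _ => σ x)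
    · intro x hx
      rw [Finset.mem_filter] at hx ⊢
      exact ⟨Finset.mem_univ _, hx.2⟩
    · intro a _ b _ h
      exact σ.injective h
    · intro y hy
      rw [Finset.mem_filter] at hy
      refine ⟨σ.symm y, Finset.mem_filter.2 ⟨Finset.mem_univ _, ?_⟩, by simp⟩
      show g (σ (σ.symm y)) = p
      rw [Equiv.apply_symm_apply]
      exact hy.2
  let T := {g : Fin n → ℕ × ℕ // ∀ p, fibcard g p = cnt i p}
  let F : Equiv.Perm (Fin n) → T := fun σ => ⟨g0 ∘ σ, fun p => (hcomp g0 σ p).trans (hg0 p)⟩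
  have hsurj : ∀ t : T, ∃ σ, F σ = t := by
    intro t
    have hcards : ∀ p, Fintype.card {x // t.1 x = p} = Fintype.card {x // g0 x = p} := by
      intro p
      rw [Fintype.card_subtype, Fintype.card_subtype]
      show fibcard t.1 p = fibcard g0 p
      rw [t.2 p, hg0 p]
    refine ⟨Equiv.ofFiberEquiv (f := t.1) (g := g0)
      (fun p => Fintype.equivOfCardEq (hcards p)), ?_⟩
    apply Subtype.ext
    funext x
    exact Equiv.ofFiberEquiv_map _ x
  let Stab := {τ : Equiv.Perm (Fin n) // g0 ∘ τ = g0}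
  have eFib : ∀ t : T, {σ // F σ = t} ≃ Stab := by
    intro t
    have hσ0 : F (hsurj t).choose = t := (hsurj t).choose_spec
    set σ0 := (hsurj t).choose with hσ0def
    have hσ0' : g0 ∘ σ0 = t.1 := congrArg Subtype.val hσ0
    exact {
      toFun := fun σp => ⟨σp.1 * σ0⁻¹, by
        have hσ : g0 ∘ σp.1 = t.1 := congrArg Subtype.val σp.2
        funext x
        show g0 (σp.1 (σ0⁻¹ x)) = g0 x
        have h1 : g0 (σp.1 (σ0⁻¹ x)) = t.1 (σ0⁻¹ x) := congrFun hσ _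
        rw [h1, ← hσ0']
        show g0 (σ0 (σ0⁻¹ x)) = g0 x
        exact congrArg g0 (σ0.apply_symm_apply x)⟩
      invFun := fun τp => ⟨τp.1 * σ0, by
        apply Subtype.ext
        funext x
        show g0 (τp.1 (σ0 x)) = t.1 x
        have h1 : g0 (τp.1 (σ0 x)) = g0 (σ0 x) := congrFun τp.2 _
        rw [h1]
        exact congrFun hσ0' x⟩
      left_inv := fun σp => Subtype.ext (by
        show σp.1 * σ0⁻¹ * σ0 = σp.1
        rw [inv_mul_cancel_right])
      right_inv := fun τp => Subtype.ext (by
        show τp.1 * σ0 * σ0⁻¹ = τp.1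
        rw [mul_inv_cancel_right]) }
  have ePerm : Equiv.Perm (Fin n) ≃ T × Stab :=
    ((Equiv.sigmaFiberEquiv F).symm.trans (Equiv.sigmaCongrRight eFib)).trans
      (Equiv.sigmaEquivProd T Stab)
  have hmul : n.factorial = Nat.card T * Nat.card Stab := by
    have h := Nat.card_congr ePerm
    rw [Nat.card_prod] at h
    rw [← h, Nat.card_eq_fintype_card, Fintype.card_perm, Fintype.card_fin]
  have hstab : Nat.card Stab = ∏ j ∈ Finset.Icc 1 i.dmax, (i.mult j).factorial ^ j := by
    rw [Nat.card_eq_fintype_card]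
    rw [show Fintype.card Stab = Fintype.card {τ : Equiv.Perm (Fin n) // g0 ∘ ⇑τ = g0} from rfl]
    rw [DomMulAct.stabilizer_card' g0]
    have himg : Finset.image g0 Finset.univ = Ai i := by
      ext p
      rw [Finset.mem_image, ← cnt_pos_iff (i := i), ← hg0 p]
      constructor
      · rintro ⟨x, -, rfl⟩
        exact fibcard_pos_of_mem g0 x
      · intro h
        obtain ⟨x, hx⟩ := exists_of_fibcard_pos g0 h
        exact ⟨x, Finset.mem_univ _, hx⟩
    rw [himg]
    have hcard : ∀ p ∈ Ai i, (Fintype.card {a // g0 a = p}).factorial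
        = (i.mult p.1).factorial := by
      intro p hp
      congr 1
      rw [Fintype.card_subtype]
      show fibcard g0 p = _
      rw [hg0 p, cnt, if_pos (mem_Ai.1 hp).2]
    rw [Finset.prod_congr rfl hcard]
    rw [Ai, Finset.prod_biUnion (pairwiseDisjoint_pairs _)]
    have h3 : ∀ j ∈ i.parts.toFinset,
        ∏ p ∈ (Finset.range j).image (fun r => (j, r)), (i.mult p.1).factorial
          = (i.mult j).factorial ^ j := by
      intro j hj
      rw [Finset.prod_image (fun a _ b _ h => (Prod.ext_iff.1 h).2)]
      show ∏ _r ∈ Finset.range j, (i.mult j).factorial = _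
      rw [Finset.prod_const, Finset.card_range]
    rw [Finset.prod_congr rfl h3]
    apply Finset.prod_subset
    · intro j hj
      rw [Finset.mem_Icc]
      have hjm := Multiset.mem_toFinset.1 hj
      exact ⟨i.parts_pos hjm, Finset.le_sup (f := id) hj⟩
    · intro j _ hj
      have : i.mult j = 0 := by
        rw [Nat.Partition.mult, Multiset.count_eq_zero]
        intro hmem
        exact hj (Multiset.mem_toFinset.2 hmem)
      rw [this]
      simp
  have hspos : 0 < ∏ j ∈ Finset.Icc 1 i.dmax, (i.mult j).factorial ^ j :=
    Finset.prod_pos (fun j _ => pow_pos (Nat.factorial_pos _) _)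
  show Nat.card T = _
  rw [hmul, ← hstab, Nat.mul_div_cancel _ (hstab ▸ hspos : 0 < Nat.card Stab)]

end S7

open Finset in
/-- `φ(μ) = φ(μ')` iff the matrix representations agree up to
permutations within columns; consequently the number of `≡₀`-classes is
`∑_i n! / ∏_j (m(i,j)!)^j`. -/
theorem phi_eq_iff_col_eq_and_card (n : ℕ) (hn : 1 ≤ n) :
    (∀ μ μ' : PartitionedOrder n,
      μ.phi = μ'.phi ↔ ∀ j ℓ, ℓ < j → μ.colSet j ℓ = μ'.colSet j ℓ) ∧
    Nat.card (Quot (fun μ μ' : PartitionedOrder n => μ.phi = μ'.phi)) =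
      ∑ i : n.Partition,
        n.factorial / ∏ j ∈ Icc 1 i.dmax, (i.mult j).factorial ^ j := by
  refine ⟨fun μ μ' => PartitionedOrder.phi_eq_iff_colSet, ?_⟩
  rw [Nat.card_congr ((quotEquivGood n).trans (goodEquivSigma n)), natCard_sigma]
  exact Finset.sum_congr rfl (fun i _ => card_type i)
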